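/- In the Colonel Blotto game with favoritism with n battlefields, if battlefield i satisfies p_i ≥ 0 and 0 < q_i·w_i·κ_B − p_i ≤ w_i·κ_A for some κ_A, κ_B > 0, and Player A's allocation A_i has CDF F(x) = p_i/(q_i w_i κ_B) + x/(q_i w_i κ_B) on [0, q_i w_i κ_B − p_i] while Player B's allocation B_i has CDF G(x) = 1 − q_i κ_B/κ_A + p_i/(w_i κ_A) on [0, p_i/q_i), G(x) = 1 − q_i κ_B/κ_A + q_i x/(w_i κ_A) on [p_i/q_i, w_i κ_B], G(x)=1 beyond, with A_i, B_i independent, then Player A's expected gain in battlefield i, w_i·P(A_i > q_i·B_i − p_i) + α·w_i·P(A_i = q_i·B_i − p_i), equals w_i·(1 − q_i κ_B/κ_A + p_i/(w_i κ_A)) + (q_i w_i κ_B − p_i)²/(2 w_i κ_A q_i κ_B). -/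

import Mathlib

open MeasureTheory ProbabilityTheory Set
open scoped ProbabilityTheory

lemma aux_mu_Iic (p c : ℝ) (hp : 0 ≤ p) (hc : 0 < c) (hT : 0 < c - p) (x : ℝ) :
    (ENNReal.ofReal (p / c) • Measure.dirac (0:ℝ)
      + ENNReal.ofReal (1 / c) • volume.restrict (Icc 0 (c - p))) (Iic x)
    = ENNReal.ofReal
      (if x < 0 then 0 else if x ≤ c - p then p / c + x / c else 1) := by
  rw [Measure.add_apply, Measure.smul_apply, Measure.smul_apply,
    Measure.dirac_apply' _ measurableSet_Iic, Measure.restrict_apply measurableSet_Iic]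
  rcases lt_or_ge x 0 with hx | hx
  · have h1 : Iic x ∩ Icc 0 (c - p) = ∅ := by
      ext b; simp only [mem_inter_iff, mem_Iic, mem_Icc, mem_empty_iff_false, iff_false]
      rintro ⟨h1, h2, _⟩; linarith
    simp [hx, h1, Set.indicator_apply, not_le.mpr hx]
  · rcases le_or_gt x (c - p) with hx2 | hx2
    · have h1 : Iic x ∩ Icc 0 (c - p) = Icc 0 x := by
        ext b; simp only [mem_inter_iff, mem_Iic, mem_Icc]
        constructor
        · rintro ⟨h1, h2, _⟩; exact ⟨h2, h1⟩
        · rintro ⟨h1, h2⟩; exact ⟨h2, h1, by linarith⟩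
      rw [h1, Real.volume_Icc]
      rw [if_neg (not_lt.mpr hx), if_pos hx2, Set.indicator_of_mem (by simpa using hx)]
      simp only [smul_eq_mul, Pi.one_apply, mul_one, sub_zero]
      rw [← ENNReal.ofReal_mul (by positivity)]
      rw [← ENNReal.ofReal_add (by positivity) (by positivity)]
      congr 1; field_simp
    · have h1 : Iic x ∩ Icc 0 (c - p) = Icc 0 (c - p) := by
        ext b; simp only [mem_inter_iff, mem_Iic, mem_Icc]
        exact ⟨fun h => h.2, fun h => ⟨by linarith [h.2], h⟩⟩
      rw [h1, Real.volume_Icc]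
      rw [if_neg (not_lt.mpr hx), if_neg (not_le.mpr hx2),
        Set.indicator_of_mem (by simpa using hx)]
      simp only [smul_eq_mul, Pi.one_apply, mul_one, sub_zero]
      rw [← ENNReal.ofReal_mul (by positivity)]
      rw [← ENNReal.ofReal_add (by positivity) (by positivity)]
      congr 1; field_simp; ring

lemma aux_nu_Iic (w p q κA κB : ℝ) (hw : 0 < w) (hq : 0 < q) (hκA : 0 < κA) (hκB : 0 < κB)
    (hp : 0 ≤ p) (hcase1 : 0 < q * w * κB - p) (hcase2 : q * w * κB - p ≤ w * κA) (x : ℝ) :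
    (ENNReal.ofReal (1 - q * κB / κA + p / (w * κA)) • Measure.dirac (0:ℝ)
      + ENNReal.ofReal (q / (w * κA)) • volume.restrict (Icc (p / q) (w * κB))) (Iic x)
    = ENNReal.ofReal
      (if x < 0 then 0
       else if x < p / q then 1 - q * κB / κA + p / (w * κA)
       else if x ≤ w * κB then 1 - q * κB / κA + q * x / (w * κA)
       else 1) := by
  have hg0 : 0 ≤ 1 - q * κB / κA + p / (w * κA) := by
    have h1 : (q * w * κB - p) / (w * κA) ≤ 1 := by
      rw [div_le_one (by positivity)]; exact hcase2
    have heq : 1 - q * κB / κA + p / (w * κA) = 1 - (q * w * κB - p) / (w * κA) := by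
      field_simp; ring
    linarith
  have hpq : 0 ≤ p / q := by positivity
  have hpqB : p / q ≤ w * κB := by
    rw [div_le_iff₀ hq]; nlinarith
  rw [Measure.add_apply, Measure.smul_apply, Measure.smul_apply,
    Measure.dirac_apply' _ measurableSet_Iic, Measure.restrict_apply measurableSet_Iic]
  rcases lt_or_ge x 0 with hx | hx
  · have h1 : Iic x ∩ Icc (p / q) (w * κB) = ∅ := by
      ext b; simp only [mem_inter_iff, mem_Iic, mem_Icc, mem_empty_iff_false, iff_false]
      rintro ⟨h1, h2, _⟩; nlinarith
    simp [hx, h1, Set.indicator_apply, not_le.mpr hx]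
  · rw [Set.indicator_of_mem (by simpa using hx), if_neg (not_lt.mpr hx)]
    simp only [smul_eq_mul, Pi.one_apply, mul_one]
    rcases lt_or_ge x (p / q) with hx2 | hx2
    · have h1 : Iic x ∩ Icc (p / q) (w * κB) = ∅ := by
        ext b; simp only [mem_inter_iff, mem_Iic, mem_Icc, mem_empty_iff_false, iff_false]
        rintro ⟨h1, h2, _⟩; linarith
      rw [if_pos hx2, h1]
      simp
    · rw [if_neg (not_lt.mpr hx2)]
      rcases le_or_gt x (w * κB) with hx3 | hx3
      · have h1 : Iic x ∩ Icc (p / q) (w * κB) = Icc (p / q) x := by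
          ext b; simp only [mem_inter_iff, mem_Iic, mem_Icc]
          constructor
          · rintro ⟨h1, h2, _⟩; exact ⟨h2, h1⟩
          · rintro ⟨h1, h2⟩; exact ⟨h2, h1, by linarith⟩
        rw [if_pos hx3, h1, Real.volume_Icc,
          ← ENNReal.ofReal_mul (by positivity),
          ← ENNReal.ofReal_add hg0 (mul_nonneg (by positivity) (by linarith))]
        congr 1; field_simp; ring
      · have h1 : Iic x ∩ Icc (p / q) (w * κB) = Icc (p / q) (w * κB) := by
          ext b; simp only [mem_inter_iff, mem_Iic, mem_Icc]
          exact ⟨fun h => h.2, fun h => ⟨by linarith [h.2], h⟩⟩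
        rw [if_neg (not_le.mpr hx3), h1, Real.volume_Icc,
          ← ENNReal.ofReal_mul (by positivity),
          ← ENNReal.ofReal_add hg0 (mul_nonneg (by positivity) (by linarith))]
        congr 1; field_simp; ring

theorem stmt_14 {Ω : Type*} [MeasureSpace Ω] [IsProbabilityMeasure (ℙ : Measure Ω)]
    (w p q κA κB α : ℝ) (hw : 0 < w) (hq : 0 < q) (hκA : 0 < κA) (hκB : 0 < κB)
    (hα0 : 0 ≤ α) (hα1 : α ≤ 1) (hp : 0 ≤ p)
    (hcase1 : 0 < q * w * κB - p) (hcase2 : q * w * κB - p ≤ w * κA)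
    (A B : Ω → ℝ) (hAmeas : Measurable A) (hBmeas : Measurable B)
    (hindep : IndepFun A B ℙ)
    (hAcdf : ∀ x : ℝ, ℙ {ω | A ω ≤ x} = ENNReal.ofReal
      (if x < 0 then 0
       else if x ≤ q * w * κB - p then p / (q * w * κB) + x / (q * w * κB)
       else 1))
    (hBcdf : ∀ x : ℝ, ℙ {ω | B ω ≤ x} = ENNReal.ofReal
      (if x < 0 then 0
       else if x < p / q then 1 - q * κB / κA + p / (w * κA)
       else if x ≤ w * κB then 1 - q * κB / κA + q * x / (w * κA)
       else 1)) :
    w * (ℙ {ω | q * B ω - p < A ω}).toReal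
      + α * w * (ℙ {ω | A ω = q * B ω - p}).toReal
    = w * (1 - q * κB / κA + p / (w * κA))
      + (q * w * κB - p) ^ 2 / (2 * w * κA * q * κB) := by
  have hc : 0 < q * w * κB := by positivity
  have hg0 : 0 ≤ 1 - q * κB / κA + p / (w * κA) := by
    have h1 : (q * w * κB - p) / (w * κA) ≤ 1 := by
      rw [div_le_one (by positivity)]; exact hcase2
    have heq : 1 - q * κB / κA + p / (w * κA) = 1 - (q * w * κB - p) / (w * κA) := by
      field_simp; ring
    linarith
  have hpqB : p / q ≤ w * κB := by rw [div_le_iff₀ hq]; nlinarith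
  set μ' : Measure ℝ := ENNReal.ofReal (p / (q * w * κB)) • Measure.dirac 0
      + ENNReal.ofReal (1 / (q * w * κB)) • volume.restrict (Icc 0 (q * w * κB - p)) with hμ'def
  set ν' : Measure ℝ := ENNReal.ofReal (1 - q * κB / κA + p / (w * κA)) • Measure.dirac 0
      + ENNReal.ofReal (q / (w * κA)) • volume.restrict (Icc (p / q) (w * κB)) with hν'def
  have hmapA : Measure.map A ℙ = μ' := by
    haveI : IsProbabilityMeasure (Measure.map A ℙ) :=
      Measure.isProbabilityMeasure_map hAmeas.aemeasurable
    refine Measure.ext_of_Iic _ _ (fun x => ?_)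
    rw [Measure.map_apply hAmeas measurableSet_Iic]
    show ℙ {ω | A ω ≤ x} = _
    rw [hAcdf x, hμ'def, aux_mu_Iic p (q * w * κB) hp hc hcase1 x]
  have hmapB : Measure.map B ℙ = ν' := by
    haveI : IsProbabilityMeasure (Measure.map B ℙ) :=
      Measure.isProbabilityMeasure_map hBmeas.aemeasurable
    refine Measure.ext_of_Iic _ _ (fun x => ?_)
    rw [Measure.map_apply hBmeas measurableSet_Iic]
    show ℙ {ω | B ω ≤ x} = _
    rw [hBcdf x, hν'def, aux_nu_Iic w p q κA κB hw hq hκA hκB hp hcase1 hcase2 x]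
  haveI hμ'P : IsProbabilityMeasure μ' := by
    rw [← hmapA]; exact Measure.isProbabilityMeasure_map hAmeas.aemeasurable
  haveI hν'P : IsProbabilityMeasure ν' := by
    rw [← hmapB]; exact Measure.isProbabilityMeasure_map hBmeas.aemeasurable
  have hprod : Measure.map (fun ω => (B ω, A ω)) ℙ = ν'.prod μ' := by
    rw [← hmapA, ← hmapB]
    exact (indepFun_iff_map_prod_eq_prod_map_map hBmeas.aemeasurable
      hAmeas.aemeasurable).mp hindep.symm
  -- complement formula
  have hIoi : ∀ t : ℝ, μ' (Ioi t)
      = 1 - ENNReal.ofReal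
        (if t < 0 then 0
         else if t ≤ q * w * κB - p then p / (q * w * κB) + t / (q * w * κB)
         else 1) := by
    intro t
    rw [← compl_Iic, measure_compl measurableSet_Iic (measure_ne_top _ _), measure_univ,
      hμ'def, aux_mu_Iic p (q * w * κB) hp hc hcase1 t]
  -- Event 1
  have hS : MeasurableSet {x : ℝ × ℝ | q * x.1 - p < x.2} :=
    measurableSet_lt (by fun_prop) measurable_snd
  have hev1 : ℙ {ω | q * B ω - p < A ω} = ∫⁻ b, μ' (Ioi (q * b - p)) ∂ν' := by
    have hpre : {ω | q * B ω - p < A ω}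
        = (fun ω => (B ω, A ω)) ⁻¹' {x : ℝ × ℝ | q * x.1 - p < x.2} := rfl
    rw [hpre, ← Measure.map_apply (hBmeas.prodMk hAmeas) hS, hprod,
      Measure.prod_apply hS]
    exact lintegral_congr (fun b => rfl)
  -- decompose the lintegral over ν'
  have hf0 : μ' (Ioi (q * (0:ℝ) - p)) = 1 := by
    rw [hIoi]
    have h0 : (if q * (0:ℝ) - p < 0 then (0:ℝ)
        else if q * (0:ℝ) - p ≤ q * w * κB - p then p / (q * w * κB) + (q * (0:ℝ) - p) / (q * w * κB)
        else 1) = 0 := by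
      have hng : ¬ (q * (0:ℝ) - p < 0) → q * (0:ℝ) - p ≤ q * w * κB - p := by
        intro h; push_neg at h; nlinarith
      split_ifs with h1 h2
      · rfl
      · ring
      · exact absurd (hng h1) h2
    rw [h0, ENNReal.ofReal_zero, tsub_zero]
  have hstep : ∀ b ∈ Icc (p / q) (w * κB),
      μ' (Ioi (q * b - p)) = ENNReal.ofReal (1 - b / (w * κB)) := by
    intro b hb
    obtain ⟨hb1, hb2⟩ := hb
    have hqb : 0 ≤ q * b - p := by
      rw [div_le_iff₀ hq] at hb1; linarith
    have h2 : q * b - p ≤ q * w * κB - p := by nlinarith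
    rw [hIoi, if_neg (not_lt.mpr hqb), if_pos h2]
    rw [← ENNReal.ofReal_one,
      ← ENNReal.ofReal_sub 1 (add_nonneg (by positivity) (div_nonneg hqb hc.le))]
    congr 1
    field_simp
    ring
  have hJ : ∫ b in Icc (p / q) (w * κB), (1 - b / (w * κB))
      = (q * w * κB - p) ^ 2 / (2 * q ^ 2 * (w * κB)) := by
    rw [integral_Icc_eq_integral_Ioc, ← intervalIntegral.integral_of_le hpqB]
    have h1 : IntervalIntegrable (fun b : ℝ => b / (w * κB)) volume (p / q) (w * κB) :=
      (continuous_id.div_const _).intervalIntegrable _ _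
    rw [intervalIntegral.integral_sub (intervalIntegrable_const) h1,
      intervalIntegral.integral_const, intervalIntegral.integral_div, integral_id]
    rw [smul_eq_mul, mul_one]
    field_simp
    ring
  have hIccInt : ∫⁻ b in Icc (p / q) (w * κB), μ' (Ioi (q * b - p)) ∂volume
      = ENNReal.ofReal ((q * w * κB - p) ^ 2 / (2 * q ^ 2 * (w * κB))) := by
    rw [setLIntegral_congr_fun measurableSet_Icc
      hstep]
    rw [← ofReal_integral_eq_lintegral_ofReal]
    · rw [hJ]
    · exact (continuous_const.sub (continuous_id.div_const _)).integrableOn_Icc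
    · refine ae_restrict_of_forall_mem measurableSet_Icc (fun b hb => ?_)
      have : b ≤ w * κB := hb.2
      have hwκB : 0 < w * κB := by positivity
      rw [Pi.zero_apply, sub_nonneg, div_le_one hwκB]
      exact this
  have hev1' : ℙ {ω | q * B ω - p < A ω}
      = ENNReal.ofReal (1 - q * κB / κA + p / (w * κA))
        + ENNReal.ofReal (q / (w * κA))
          * ENNReal.ofReal ((q * w * κB - p) ^ 2 / (2 * q ^ 2 * (w * κB))) := by
    rw [hev1, hν'def, lintegral_add_measure, lintegral_smul_measure, lintegral_smul_measure,
      lintegral_dirac, hf0, smul_eq_mul, smul_eq_mul, mul_one, hIccInt]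
  -- Event 2
  have hsingle : ∀ t : ℝ, μ' {t} = if t = 0 then ENNReal.ofReal (p / (q * w * κB)) else 0 := by
    intro t
    rw [hμ'def, Measure.add_apply, Measure.smul_apply, Measure.smul_apply,
      Measure.dirac_apply' _ (measurableSet_singleton t),
      Measure.restrict_apply (measurableSet_singleton t)]
    have hvol : volume ({t} ∩ Icc 0 (q * w * κB - p)) = 0 :=
      measure_mono_null inter_subset_left Real.volume_singleton
    rw [hvol, smul_zero, add_zero]
    rcases eq_or_ne t 0 with h | h
    · rw [if_pos h, Set.indicator_of_mem (by simp [h]), Pi.one_apply, smul_eq_mul, mul_one]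
    · rw [if_neg h, Set.indicator_of_notMem (by simp [Ne.symm h]), smul_zero]
  have hev2 : ℙ {ω | A ω = q * B ω - p} = 0 := by
    have hS2 : MeasurableSet {x : ℝ × ℝ | x.2 = q * x.1 - p} :=
      measurableSet_eq_fun measurable_snd (by fun_prop)
    have hpre : {ω | A ω = q * B ω - p}
        = (fun ω => (B ω, A ω)) ⁻¹' {x : ℝ × ℝ | x.2 = q * x.1 - p} := rfl
    rw [hpre, ← Measure.map_apply (hBmeas.prodMk hAmeas) hS2, hprod,
      Measure.prod_apply hS2]
    have hpt : ∀ b : ℝ, (Prod.mk b ⁻¹' {x : ℝ × ℝ | x.2 = q * x.1 - p}) = {q * b - p} := by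
      intro b; ext a; simp [mem_singleton_iff]
    have hbound : ∀ b : ℝ, μ' (Prod.mk b ⁻¹' {x : ℝ × ℝ | x.2 = q * x.1 - p})
        ≤ ({p / q} : Set ℝ).indicator (fun _ => ENNReal.ofReal (p / (q * w * κB))) b := by
      intro b
      rw [hpt b, hsingle]
      rcases eq_or_ne b (p / q) with hb | hb
      · have ht : q * b - p = 0 := by rw [hb]; field_simp; ring
        rw [if_pos ht, Set.indicator_of_mem (by simp [hb])]
      · have ht : q * b - p ≠ 0 := by
          intro h
          apply hb
          field_simp at h ⊢
          linarith
        rw [if_neg ht]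
        exact zero_le
    refine le_antisymm ?_ zero_le
    calc ∫⁻ b, μ' (Prod.mk b ⁻¹' {x : ℝ × ℝ | x.2 = q * x.1 - p}) ∂ν'
        ≤ ∫⁻ b, ({p / q} : Set ℝ).indicator
            (fun _ => ENNReal.ofReal (p / (q * w * κB))) b ∂ν' :=
          lintegral_mono hbound
      _ = ENNReal.ofReal (p / (q * w * κB)) * ν' {p / q} := by
          rw [lintegral_indicator (measurableSet_singleton _), setLIntegral_const]
      _ = 0 := by
          rcases eq_or_lt_of_le hp with hp0 | hp0
          · rw [← hp0]
            simp
          · have hν'pt : ν' {p / q} = 0 := by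
              rw [hν'def, Measure.add_apply, Measure.smul_apply, Measure.smul_apply,
                Measure.dirac_apply' _ (measurableSet_singleton _),
                Measure.restrict_apply (measurableSet_singleton _)]
              have h1 : (0:ℝ) ∉ ({p / q} : Set ℝ) := by
                simp only [mem_singleton_iff]
                intro h
                have : p = 0 := by field_simp at h; linarith
                linarith
              rw [Set.indicator_of_notMem h1,
                measure_mono_null inter_subset_left Real.volume_singleton]
              simp
            rw [hν'pt, mul_zero]
    -- done hev2
  rw [hev1', hev2]
  have hJnn : 0 ≤ (q * w * κB - p) ^ 2 / (2 * q ^ 2 * (w * κB)) := by positivity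
  rw [← ENNReal.ofReal_mul (by positivity),
    ← ENNReal.ofReal_add hg0 (by positivity), ENNReal.toReal_ofReal
      (by positivity), ENNReal.toReal_zero, mul_zero, add_zero]
  field_simp
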